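/- The forcing Q_{A,ρ} for adding a cofinitary group (conditions: pairs (s,F) with s ⊆ A × ω × ω finite, each s_a a finite injection, F a finite set of cyclically reduced words in W_{A∪B}; extension as in Definition 2.4) has the Knaster property: every uncountable set of conditions contains an uncountable subset of pairwise compatible conditions. -/

import Mathlib

/-- A word (list of signed letters) is reduced: no adjacent pair `a aᵃ⁻¹`. -/
def Reduced {A : Type*} (l : List (A × Bool)) : Prop :=
  List.Chain' (fun x y => x.1 ≠ y.1 ∨ x.2 = y.2) l

/-- The section `s_a ⊆ ω × ω` of `s ⊆ A × ω × ω`. -/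
def sec {A : Type*} (s : Set (A × ℕ × ℕ)) (a : A) : Set (ℕ × ℕ) :=
  {p | (a, p.1, p.2) ∈ s}

/-- Inverse of a relation on ω. -/
def relInv (R : Set (ℕ × ℕ)) : Set (ℕ × ℕ) := {p | (p.2, p.1) ∈ R}

/-- Composition `R ∘ S` of relations on ω (`S` applied first). -/
def relComp (R S : Set (ℕ × ℕ)) : Set (ℕ × ℕ) :=
  {p | ∃ k, (p.1, k) ∈ S ∧ (k, p.2) ∈ R}

/-- `R` is (the graph of) a partial injection on ω. -/
def IsPInj (R : Set (ℕ × ℕ)) : Prop :=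
  (∀ n m m', (n, m) ∈ R → (n, m') ∈ R → m = m') ∧
  (∀ n n' m, (n, m) ∈ R → (n', m) ∈ R → n = n')

/-- Evaluation of a single signed letter. -/
def lit {A : Type*} (s : Set (A × ℕ × ℕ)) (x : A × Bool) : Set (ℕ × ℕ) :=
  if x.2 then sec s x.1 else relInv (sec s x.1)

/-- The evaluation `e_w[s]` of a word `w`, defined recursively by composition. -/
def eval {A : Type*} (s : Set (A × ℕ × ℕ)) : List (A × Bool) → Set (ℕ × ℕ)
  | [] => {p : ℕ × ℕ | p.1 = p.2}
  | x :: l => relComp (lit s x) (eval s l)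

/-- `w` is cyclically reduced (in `Ŵ_A`): nonempty, reduced, and either a power
of a single letter, or its first and last letters differ. -/
def CyclRed {A : Type*} (l : List (A × Bool)) : Prop :=
  l ≠ [] ∧ Reduced l ∧
    ((∃ c, ∀ x ∈ l, x = c) ∨
     (∃ x y, l.head? = some x ∧ l.getLast? = some y ∧ x.1 ≠ y.1))

/-- Evaluation of a word over `B` as a product of the permutations `ρ(b)`. -/
def permEval {B : Type*} (ρ : B → Equiv.Perm ℕ) : List (B × Bool) → Equiv.Perm ℕ
  | [] => 1
  | x :: l => (if x.2 then ρ x.1 else (ρ x.1)⁻¹) * permEval ρ l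

/-- `ρ : B → S_∞` induces a cofinitary representation of the free group `F_B`:
every reduced word evaluates either to the identity or to a permutation with
finitely many fixed points. -/
def Cofinitary {B : Type*} (ρ : B → Equiv.Perm ℕ) : Prop :=
  ∀ l : List (B × Bool), Reduced l →
    permEval ρ l = 1 ∨ {n : ℕ | permEval ρ l n = n}.Finite

/-- Combine `s ⊆ A × ω × ω` and `ρ : B → S_∞` into one set of triples over
the alphabet `A ⊕ B`, so that `e_w[s,ρ] = eval (mix s ρ) w`. -/
def mix {A B : Type*} (s : Set (A × ℕ × ℕ)) (ρ : B → Equiv.Perm ℕ) :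
    Set ((A ⊕ B) × ℕ × ℕ) :=
  {q | Sum.elim (fun a => (a, q.2) ∈ s) (fun b => ρ b q.2.1 = q.2.2) q.1}

/-- A condition of `Q_{A,ρ}`: a finite `s ⊆ A × ω × ω` with every section a
finite injection, together with a finite set of cyclically reduced words over
`A ∪ B`. -/
def IsQCond {A B : Type*}
    (p : Set (A × ℕ × ℕ) × Set (List ((A ⊕ B) × Bool))) : Prop :=
  p.1.Finite ∧ (∀ a, IsPInj (sec p.1 a)) ∧ p.2.Finite ∧ ∀ w ∈ p.2, CyclRed w

/-- The extension relation of `Q_{A,ρ}`: `QLe ρ p q` means `p ≤ q`, i.e.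
`p` extends `q`: larger data, larger side condition, and no new fixed points of
`e_w[·,ρ]` for words `w` in the side condition of `q`. -/
def QLe {A B : Type*} (ρ : B → Equiv.Perm ℕ)
    (p q : Set (A × ℕ × ℕ) × Set (List ((A ⊕ B) × Bool))) : Prop :=
  q.1 ⊆ p.1 ∧ q.2 ⊆ p.2 ∧
    ∀ w ∈ q.2, ∀ n : ℕ, (n, n) ∈ eval (mix p.1 ρ) w → (n, n) ∈ eval (mix q.1 ρ) w


-- ### auxiliary lemmas

/-- Domain of relevance of a condition: letters with nonempty section, plus
`A`-letters occurring in some side-condition word. -/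
def Dset {A B : Type*} (p : Set (A × ℕ × ℕ) × Set (List ((A ⊕ B) × Bool))) : Set A :=
  {a | (sec p.1 a).Nonempty} ∪ {a | ∃ w ∈ p.2, ∃ b, ((Sum.inl a : A ⊕ B), b) ∈ w}

lemma sec_union {A : Type*} (s t : Set (A × ℕ × ℕ)) (a : A) :
    sec (s ∪ t) a = sec s a ∪ sec t a := rfl

lemma sec_mix_inl {A B : Type*} (s : Set (A × ℕ × ℕ)) (ρ : B → Equiv.Perm ℕ) (a : A) :
    sec (mix s ρ) (Sum.inl a) = sec s a := rfl

lemma sec_mix_inr {A B : Type*} (s : Set (A × ℕ × ℕ)) (ρ : B → Equiv.Perm ℕ) (b : B) :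
    sec (mix s ρ) (Sum.inr b) = {p : ℕ × ℕ | ρ b p.1 = p.2} := rfl

lemma sec_finite {A : Type*} {s : Set (A × ℕ × ℕ)} (hs : s.Finite) (a : A) :
    (sec s a).Finite := by
  have : sec s a = (fun p : ℕ × ℕ => (a, p)) ⁻¹' s := rfl
  rw [this]
  exact Set.Finite.preimage (Set.injOn_of_injective
    (fun p q h => by simpa using h)) hs

lemma eval_congr {A B : Type*} (ρ : B → Equiv.Perm ℕ) (s s' : Set (A × ℕ × ℕ))
    (w : List ((A ⊕ B) × Bool))
    (h : ∀ a, (∃ b, ((Sum.inl a : A ⊕ B), b) ∈ w) → sec s a = sec s' a) :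
    eval (mix s ρ) w = eval (mix s' ρ) w := by
  induction w with
  | nil => rfl
  | cons x l ih =>
    have hl : eval (mix s ρ) l = eval (mix s' ρ) l :=
      ih fun a ⟨b, hb⟩ => h a ⟨b, List.mem_cons_of_mem x hb⟩
    have hx : sec (mix s ρ) x.1 = sec (mix s' ρ) x.1 := by
      rcases x with ⟨a | b, c⟩
      · exact h a ⟨c, List.mem_cons_self⟩
      · rfl
    show relComp (lit (mix s ρ) x) _ = relComp (lit (mix s' ρ) x) _
    rw [hl, lit, lit, hx]

/-- Amalgamation: two conditions agreeing on the intersection of their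
domains of relevance are compatible. -/
lemma amalg {A B : Type*} (ρ : B → Equiv.Perm ℕ)
    (p q : Set (A × ℕ × ℕ) × Set (List ((A ⊕ B) × Bool)))
    (hp : IsQCond p) (hq : IsQCond q)
    (H : ∀ a, a ∈ Dset p → a ∈ Dset q → sec p.1 a = sec q.1 a) :
    ∃ r, IsQCond r ∧ QLe ρ r p ∧ QLe ρ r q := by
  refine ⟨(p.1 ∪ q.1, p.2 ∪ q.2), ⟨hp.1.union hq.1, ?_, hp.2.2.1.union hq.2.2.1, ?_⟩,
    ?_, ?_⟩
  · -- sections are partial injections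
    intro a
    rw [sec_union]
    rcases Set.eq_empty_or_nonempty (sec p.1 a) with hpe | hpn
    · rw [hpe, Set.empty_union]; exact hq.2.1 a
    rcases Set.eq_empty_or_nonempty (sec q.1 a) with hqe | hqn
    · rw [hqe, Set.union_empty]; exact hp.2.1 a
    · rw [H a (Or.inl hpn) (Or.inl hqn), Set.union_self]
      exact hq.2.1 a
  · -- words cyclically reduced
    rintro w (hw | hw)
    · exact hp.2.2.2 w hw
    · exact hq.2.2.2 w hw
  · -- extends p
    refine ⟨Set.subset_union_left, Set.subset_union_left, ?_⟩
    intro w hw n hn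
    rwa [eval_congr ρ (p.1 ∪ q.1) p.1 w ?_] at hn
    intro a ha
    rw [sec_union]
    rcases Set.eq_empty_or_nonempty (sec q.1 a) with hqe | hqn
    · rw [hqe, Set.union_empty]
    · rw [H a (Or.inr ⟨w, hw, ha⟩) (Or.inl hqn), Set.union_self]
  · -- extends q
    refine ⟨Set.subset_union_right, Set.subset_union_right, ?_⟩
    intro w hw n hn
    rwa [eval_congr ρ (p.1 ∪ q.1) q.1 w ?_] at hn
    intro a ha
    rw [sec_union]
    rcases Set.eq_empty_or_nonempty (sec p.1 a) with hpe | hpn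
    · rw [hpe, Set.empty_union]
    · rw [H a (Or.inl hpn) (Or.inr ⟨w, hw, ha⟩), Set.union_self]

lemma countable_pigeonhole {X β : Type*} {S : Set X} (hS : ¬S.Countable)
    (g : X → β) {C : Set β} (hC : C.Countable) (hg : ∀ p ∈ S, g p ∈ C) :
    ∃ c ∈ C, ¬{p ∈ S | g p = c}.Countable := by
  by_contra h
  push_neg at h
  apply hS
  have hsub : S ⊆ ⋃ c ∈ C, {p ∈ S | g p = c} := fun p hp =>
    Set.mem_biUnion (hg p hp) ⟨hp, rfl⟩
  exact ((hC.biUnion h).mono hsub)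

lemma delta_aux {X A : Type*} [DecidableEq A] (n : ℕ) (S : Set X) (f : X → Finset A)
    (hS : ¬S.Countable) (hcard : ∀ p ∈ S, (f p).card = n) :
    ∃ (R : Finset A) (T : Set X), T ⊆ S ∧ ¬T.Countable ∧
      ∀ p ∈ T, ∀ q ∈ T, p ≠ q → f p ∩ f q ⊆ R := by
  induction n generalizing S f with
  | zero =>
    refine ⟨∅, S, subset_rfl, hS, fun p hp q hq _ x hx => ?_⟩
    have := Finset.card_eq_zero.mp (hcard p hp)
    simp [this] at hx
  | succ n ih =>
    by_cases h : ∃ x, ¬{p ∈ S | x ∈ f p}.Countable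
    · obtain ⟨x, hx⟩ := h
      obtain ⟨R, T, hTsub, hTc, hT⟩ := ih {p ∈ S | x ∈ f p} (fun p => (f p).erase x) hx
        (fun p hp => by rw [Finset.card_erase_of_mem hp.2, hcard p hp.1]; omega)
      refine ⟨insert x R, T, fun p hp => (hTsub hp).1, hTc, ?_⟩
      intro p hp q hq hpq y hy
      rcases Finset.mem_inter.mp hy with ⟨hy1, hy2⟩
      rcases eq_or_ne y x with rfl | hyx
      · exact Finset.mem_insert_self _ _
      · exact Finset.mem_insert_of_mem (hT p hp q hq hpq
          (Finset.mem_inter.mpr ⟨Finset.mem_erase.mpr ⟨hyx, hy1⟩,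
            Finset.mem_erase.mpr ⟨hyx, hy2⟩⟩))
    · push_neg at h
      have hzc : ∀ c ⊆ {T | T ⊆ S ∧ T.Pairwise fun p q => Disjoint (f p) (f q)},
          IsChain (fun x1 x2 => x1 ⊆ x2) c →
          ∃ ub ∈ {T | T ⊆ S ∧ T.Pairwise fun p q => Disjoint (f p) (f q)},
            ∀ s ∈ c, s ⊆ ub := by
        intro c hc hchain
        refine ⟨⋃₀ c, ⟨fun x hx => ?_, ?_⟩, fun s hs => Set.subset_sUnion_of_mem hs⟩
        · obtain ⟨t, htc, hxt⟩ := hx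
          exact (hc htc).1 hxt
        · intro p hp q hq hpq
          obtain ⟨t1, ht1, hpt1⟩ := hp
          obtain ⟨t2, ht2, hqt2⟩ := hq
          rcases eq_or_ne t1 t2 with rfl | hne
          · exact (hc ht1).2 hpt1 hqt2 hpq
          · rcases hchain ht1 ht2 hne with hle | hle
            · exact (hc ht2).2 (hle hpt1) hqt2 hpq
            · exact (hc ht1).2 hpt1 (hle hqt2) hpq
      obtain ⟨M, hM⟩ := zorn_subset
        {T | T ⊆ S ∧ T.Pairwise fun p q => Disjoint (f p) (f q)} hzc
      have hMS : M ⊆ S := hM.prop.1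
      have hMnc : ¬M.Countable := by
        intro hMc
        apply hS
        have hsub : S ⊆ M ∪ ⋃ p ∈ M, ⋃ x ∈ f p, {q ∈ S | x ∈ f q} := by
          intro q hq
          by_cases hqM : q ∈ M
          · exact Or.inl hqM
          · right
            have hins : insert q M ∉
                {T | T ⊆ S ∧ T.Pairwise fun p q => Disjoint (f p) (f q)} := by
              intro hmem
              exact hqM (hM.2 hmem (Set.subset_insert q M) (Set.mem_insert q M))
            have hnp : ¬ (M.Pairwise (fun p q => Disjoint (f p) (f q)) ∧
                ∀ b ∈ M, q ≠ b → Disjoint (f q) (f b)) := by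
              intro ⟨h1, h2⟩
              exact hins ⟨Set.insert_subset hq hMS,
                (by haveI : Std.Symm (fun p q => Disjoint (f p) (f q)) := ⟨fun a b hab => hab.symm⟩; exact Set.pairwise_insert_of_symmetric.mpr ⟨h1, h2⟩)⟩
            push_neg at hnp
            obtain ⟨p, hpM, hpq, hdis⟩ := hnp hM.prop.2
            obtain ⟨y, hy1, hy2⟩ := Finset.not_disjoint_iff.mp hdis
            exact Set.mem_biUnion hpM (Set.mem_biUnion hy2 ⟨hq, hy1⟩)
        refine (Set.Countable.union hMc ?_).mono hsub
        exact hMc.biUnion fun p _ => (Finset.countable_toSet (f p)).biUnion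
          fun x _ => h x
      refine ⟨∅, M, hMS, hMnc, ?_⟩
      intro p hp q hq hpq
      have hd := hM.prop.2 hp hq hpq
      rw [Finset.disjoint_iff_inter_eq_empty.mp hd]

lemma delta_lemma {X A : Type*} [DecidableEq A] (S : Set X) (f : X → Finset A)
    (hS : ¬S.Countable) :
    ∃ (R : Finset A) (T : Set X), T ⊆ S ∧ ¬T.Countable ∧
      ∀ p ∈ T, ∀ q ∈ T, p ≠ q → f p ∩ f q ⊆ R := by
  obtain ⟨n, -, hn⟩ := countable_pigeonhole hS (fun p => (f p).card)
    Set.countable_univ (fun p _ => Set.mem_univ _)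
  obtain ⟨R, T, h1, h2, h3⟩ := delta_aux n _ _ hn (fun p hp => hp.2)
  exact ⟨R, T, fun p hp => (h1 hp).1, h2, h3⟩

lemma dset_finite {A B : Type*} {p : Set (A × ℕ × ℕ) × Set (List ((A ⊕ B) × Bool))}
    (hp : IsQCond p) : (Dset p).Finite := by
  apply Set.Finite.union
  · refine (hp.1.image Prod.fst).subset ?_
    rintro a ⟨⟨m, n⟩, hmn⟩
    exact ⟨(a, m, n), hmn, rfl⟩
  · have hL : {c : A ⊕ B | ∃ w ∈ p.2, ∃ b, (c, b) ∈ w}.Finite := by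
      have : {c : A ⊕ B | ∃ w ∈ p.2, ∃ b, (c, b) ∈ w} =
          ⋃ w ∈ p.2, Prod.fst '' {x | x ∈ w} := by
        ext c
        constructor
        · rintro ⟨w, hw, b, hb⟩
          exact Set.mem_biUnion hw ⟨(c, b), hb, rfl⟩
        · rintro hmem
          simp only [Set.mem_iUnion] at hmem
          obtain ⟨w, hw, ⟨c', b⟩, hx, h1⟩ := hmem
          subst h1
          exact ⟨w, hw, b, hx⟩
      rw [this]
      exact Set.Finite.biUnion hp.2.2.1 fun w _ => w.finite_toSet.image _
    have : {a : A | ∃ w ∈ p.2, ∃ b, ((Sum.inl a : A ⊕ B), b) ∈ w} =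
        Sum.inl ⁻¹' {c : A ⊕ B | ∃ w ∈ p.2, ∃ b, (c, b) ∈ w} := rfl
    rw [this]
    exact Set.Finite.preimage (Set.injOn_of_injective Sum.inl_injective) hL

/-- `Q_{A,ρ}` has the Knaster property: every uncountable set of conditions
contains an uncountable subset of pairwise compatible conditions. -/
theorem stmt5 {A B : Type*} (ρ : B → Equiv.Perm ℕ) (hρ : Cofinitary ρ)
    (S : Set (Set (A × ℕ × ℕ) × Set (List ((A ⊕ B) × Bool))))
    (hS : ∀ p ∈ S, IsQCond p) (hunc : ¬ S.Countable) :
    ∃ T ⊆ S, ¬ T.Countable ∧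
      ∀ p ∈ T, ∀ q ∈ T, ∃ r, IsQCond r ∧ QLe ρ r p ∧ QLe ρ r q := by
  classical
  set f : Set (A × ℕ × ℕ) × Set (List ((A ⊕ B) × Bool)) → Finset A :=
    fun p => if h : (Dset p).Finite then h.toFinset else ∅ with hfdef
  have hf : ∀ p ∈ S, (f p : Set A) = Dset p := by
    intro p hp
    simp only [hfdef, dif_pos (dset_finite (hS p hp))]
    exact Set.Finite.coe_toFinset _
  obtain ⟨R, T₁, hT₁S, hT₁c, hRoot⟩ := delta_lemma S f hunc
  set g : Set (A × ℕ × ℕ) × Set (List ((A ⊕ B) × Bool)) → Set (A × Set (ℕ × ℕ)) :=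
    fun p => (fun a => (a, sec p.1 a)) '' {a | a ∈ (R : Set A) ∧ (sec p.1 a).Nonempty}
    with hgdef
  have hfinT : {t : Set (ℕ × ℕ) | t.Finite}.Countable := by
    have := Set.countable_setOf_finite_subset (Set.countable_univ (α := ℕ × ℕ))
    simpa using this
  have hC : {E : Set (A × Set (ℕ × ℕ)) |
      E.Finite ∧ E ⊆ (R : Set A) ×ˢ {t | t.Finite}}.Countable :=
    Set.countable_setOf_finite_subset ((R.countable_toSet).prod hfinT)
  have hgC : ∀ p ∈ T₁, g p ∈ {E : Set (A × Set (ℕ × ℕ)) |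
      E.Finite ∧ E ⊆ (R : Set A) ×ˢ {t | t.Finite}} := by
    intro p hp
    constructor
    · exact ((R.finite_toSet).subset fun a ha => ha.1).image _
    · rintro z ⟨a, ⟨haR, hne⟩, rfl⟩
      exact ⟨haR, sec_finite (hS p (hT₁S hp)).1 a⟩
  obtain ⟨E, -, hEnc⟩ := countable_pigeonhole hT₁c g hC hgC
  refine ⟨{p ∈ T₁ | g p = E}, fun p hp => hT₁S hp.1, hEnc, ?_⟩
  intro p hp q hq
  rcases eq_or_ne p q with rfl | hpq
  · exact ⟨p, hS p (hT₁S hp.1), ⟨subset_rfl, subset_rfl, fun w _ n hn => hn⟩,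
      ⟨subset_rfl, subset_rfl, fun w _ n hn => hn⟩⟩
  apply amalg ρ p q (hS p (hT₁S hp.1)) (hS q (hT₁S hq.1))
  intro a hap haq
  have haR : a ∈ (R : Set A) := by
    have hin : a ∈ f p ∩ f q := Finset.mem_inter.mpr
      ⟨by rw [← Finset.mem_coe, hf p (hT₁S hp.1)]; exact hap,
       by rw [← Finset.mem_coe, hf q (hT₁S hq.1)]; exact haq⟩
    exact_mod_cast hRoot p hp.1 q hq.1 hpq hin
  rcases Set.eq_empty_or_nonempty (sec q.1 a) with hqe | hqn
  · rcases Set.eq_empty_or_nonempty (sec p.1 a) with hpe | hpn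
    · rw [hpe, hqe]
    · have hmem : (a, sec p.1 a) ∈ g q := by
        rw [hq.2, ← hp.2]
        exact ⟨a, ⟨haR, hpn⟩, rfl⟩
      obtain ⟨a', ⟨_, _⟩, heq⟩ := hmem
      have h1 := congrArg Prod.fst heq
      have h2 := congrArg Prod.snd heq
      simp only at h1 h2
      subst h1
      exact h2.symm
  · have hmem : (a, sec q.1 a) ∈ g p := by
      rw [hp.2, ← hq.2]
      exact ⟨a, ⟨haR, hqn⟩, rfl⟩
    obtain ⟨a', ⟨_, _⟩, heq⟩ := hmem
    have h1 := congrArg Prod.fst heq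
    have h2 := congrArg Prod.snd heq
    simp only at h1 h2
    subst h1
    exact h2
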